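/- Let V be a real inner product space with finite-dimensional subspace V_h, and let a : V × V → ℝ be a symmetric bilinear form with: a(u − u_h, w) = 0 for all w ∈ V_h; for every e ∈ V there exists φ ∈ V with a(φ, v) = ⟨e, v⟩ for all v ∈ V and an element φ_h ∈ V_h satisfying ‖φ − φ_h‖₊ ≤ C·h·‖e‖; and |a(v, w)| ≤ C_bnd‖v‖‖w‖₊ for v ∈ V, w ∈ V (for appropriate norms with ‖·‖ the inner product norm on the error and ‖·‖₊ an augmented norm). Then ‖u − u_h‖ ≤ C_bnd·C·h·|||u − u_h|||, where |||·||| is the energy norm controlling a in the first slot. -/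

import Mathlib

theorem abstract_aubin_nitsche
    {V : Type*} [NormedAddCommGroup V] [InnerProductSpace ℝ V]
    (Vh : Submodule ℝ V) [FiniteDimensional ℝ Vh]
    (a : V → V → ℝ)
    (ha : ∀ v w₁ w₂ : V, a v (w₁ + w₂) = a v w₁ + a v w₂)
    (ha' : ∀ v₁ v₂ w : V, a (v₁ + v₂) w = a v₁ w + a v₂ w)
    (hsymm : ∀ v w : V, a v w = a w v)
    (En Np : V → ℝ) (hEn : ∀ v, 0 ≤ En v) (hNp : ∀ v, 0 ≤ Np v)
    (C C_bnd h : ℝ) (hC : 0 < C) (hCb : 0 < C_bnd) (hh : 0 < h)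
    (u u_h : V) (hu_h : u_h ∈ Vh)
    (horth : ∀ w ∈ Vh, a (u - u_h) w = 0)
    (hdual : ∀ e : V, ∃ φ : V, (∀ v : V, a φ v = inner ℝ e v) ∧
      ∃ φ_h ∈ Vh, Np (φ - φ_h) ≤ C * h * ‖e‖)
    (hbound : ∀ v w : V, |a v w| ≤ C_bnd * En v * Np w) :
    ‖u - u_h‖ ≤ C_bnd * C * h * En (u - u_h) := by
  set e := u - u_h with he
  obtain ⟨φ, hφ, φ_h, hφh, hnear⟩ := hdual e
  have key : ‖e‖^2 = a e (φ - φ_h) := by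
    have h1 : a e ((φ - φ_h) + φ_h) = a e (φ - φ_h) + a e φ_h := ha _ _ _
    rw [sub_add_cancel] at h1
    have h2 : a e φ = (‖e‖:ℝ)^2 := by
      rw [hsymm, hφ e, real_inner_self_eq_norm_sq]
    have h3 : a e φ_h = 0 := horth _ hφh
    linarith
  have hb := hbound e (φ - φ_h)
  have : ‖e‖^2 ≤ C_bnd * En e * (C * h * ‖e‖) := by
    calc ‖e‖^2 = a e (φ - φ_h) := key
      _ ≤ |a e (φ - φ_h)| := le_abs_self _
      _ ≤ C_bnd * En e * Np (φ - φ_h) := hb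
      _ ≤ C_bnd * En e * (C * h * ‖e‖) := by
          exact mul_le_mul_of_nonneg_left hnear (mul_nonneg hCb.le (hEn e))
  rcases eq_or_lt_of_le (norm_nonneg e) with h0 | h0
  · rw [← h0]; exact mul_nonneg (by positivity) (hEn e)
  · nlinarith [hEn e]
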